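/- The generating polynomial F_λ(q) counting Le-fillings of the Young diagram of λ = (λ_1,...,λ_k) (all λ_i ≥ 1) by number of 1's satisfies the recurrence F_λ(q) = q·F_{(λ_1,...,λ_{k-1},λ_k−1)}(q) + F_{(λ_1,...,λ_{k-1})}(q) + F_{(λ_1−1,...,λ_k−1)}(q) − F_{(λ_1−1,...,λ_{k-1}−1)}(q). -/

import Mathlib

/-- `D` is a Le-filling of the Young diagram with row lengths `lam` (rows indexed
top-to-bottom by `Fin k`): there is no `0` in some box having simultaneously a `1`
above it in its column and a `1` to its left in its row.  Equivalently: whenever a box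
`(i,j)` has a `1` above it (row `i' < i`, same column `j`) and a `1` to its left
(same row `i`, column `j' < j`), the box `(i,j)` itself contains a `1`. -/
def IsLeFilling {k : ℕ} (lam : Fin k → ℕ) (D : ∀ i : Fin k, Fin (lam i) → Bool) : Prop :=
  ∀ (i i' : Fin k) (j j' : ℕ) (hj : j < lam i) (hj' : j' < lam i) (hji' : j < lam i'),
    i' < i → j' < j → D i' ⟨j, hji'⟩ = true → D i ⟨j', hj'⟩ = true → D i ⟨j, hj⟩ = true

/-- The number of `1`'s in a filling. -/
def onesCount {k : ℕ} (lam : Fin k → ℕ) (D : ∀ i : Fin k, Fin (lam i) → Bool) : ℕ :=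
  ∑ i : Fin k, (Finset.univ.filter fun j : Fin (lam i) => D i j = true).card

/-- `leF lam r` is the number of Le-fillings of the Young diagram with row lengths `lam`
having exactly `r` ones, i.e. the coefficient of `q^r` in `F_λ(q)`. -/
noncomputable def leF {k : ℕ} (lam : Fin k → ℕ) (r : ℕ) : ℕ :=
  Nat.card {D : ∀ i : Fin k, Fin (lam i) → Bool // IsLeFilling lam D ∧ onesCount lam D = r}


namespace LeAux

/-- Ambient fillings of the quarter plane. -/
abbrev Fl := ℕ → ℕ → Bool

def Supp (n : ℕ) (l : ℕ → ℕ) (f : Fl) : Prop :=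
  ∀ i j, f i j = true → i < n ∧ j < l i

def GLe (n : ℕ) (l : ℕ → ℕ) (f : Fl) : Prop :=
  ∀ i' i j' j, i' < i → i < n → j' < j → j < l i →
    f i' j = true → f i j' = true → f i j = true

def cnt (n : ℕ) (l : ℕ → ℕ) (f : Fl) : ℕ :=
  ∑ i ∈ Finset.range n, ((Finset.range (l i)).filter (fun j => f i j = true)).card

def SS (n : ℕ) (l : ℕ → ℕ) (r : ℕ) : Set Fl :=
  {f | Supp n l f ∧ GLe n l f ∧ cnt n l f = r}

lemma row_del {k : ℕ} (l : ℕ → ℕ) (r : ℕ) :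
    {f | f ∈ SS (k+1) l r ∧ ∀ j, f k j = false} = SS k l r := by
  ext f
  simp only [SS, Set.mem_setOf_eq]
  constructor
  · rintro ⟨⟨h1, h2, h3⟩, hrow⟩
    refine ⟨fun i j hij => ?_, fun i' i j' j hi hin hj hjl hf1 hf2 => ?_, ?_⟩
    · obtain ⟨a, b⟩ := h1 i j hij
      rcases Nat.lt_succ_iff_lt_or_eq.mp a with a' | rfl
      · exact ⟨a', b⟩
      · simp [hrow j] at hij
    · exact h2 i' i j' j hi (Nat.lt_succ_of_lt hin) hj hjl hf1 hf2
    · rw [← h3]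
      unfold cnt
      rw [Finset.sum_range_succ]
      have : ((Finset.range (l k)).filter (fun j => f k j = true)) = ∅ := by
        apply Finset.filter_false_of_mem
        intro j _; simp [hrow j]
      simp [this]
  · rintro ⟨h1, h2, h3⟩
    have hrow : ∀ j, f k j = false := by
      intro j
      by_contra hc
      have := (h1 k j (by simpa using hc)).1
      omega
    refine ⟨⟨fun i j hij => ?_, fun i' i j' j hi hin hj hjl hf1 hf2 => ?_, ?_⟩, hrow⟩
    · obtain ⟨a, b⟩ := h1 i j hij; exact ⟨Nat.lt_succ_of_lt a, b⟩
    · rcases Nat.lt_succ_iff_lt_or_eq.mp hin with hin' | rfl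
      · exact h2 i' i j' j hi hin' hj hjl hf1 hf2
      · simp [hrow j'] at hf2
    · rw [← h3]
      unfold cnt
      rw [Finset.sum_range_succ]
      have : ((Finset.range (l k)).filter (fun j => f k j = true)) = ∅ := by
        apply Finset.filter_false_of_mem
        intro j _; simp [hrow j]
      simp [this]

lemma corner_zero_eq_union {k : ℕ} (l : ℕ → ℕ) (r : ℕ) (hpos : 1 ≤ l k)
    (hanti : ∀ i ≤ k, l k ≤ l i) :
    {f | f ∈ SS (k+1) l r ∧ f k (l k - 1) = false}
      = {f | f ∈ SS (k+1) l r ∧ ∀ i, f i (l k - 1) = false}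
        ∪ {f | f ∈ SS (k+1) l r ∧ ∀ j, f k j = false} := by
  set c := l k - 1 with hc
  ext f
  simp only [Set.mem_setOf_eq, Set.mem_union]
  constructor
  · rintro ⟨hf, hcorner⟩
    by_cases hrow : ∀ j, f k j = false
    · exact Or.inr ⟨hf, hrow⟩
    · left
      refine ⟨hf, fun i => ?_⟩
      push_neg at hrow
      obtain ⟨j', hj'⟩ := hrow
      have hj'true : f k j' = true := by simpa using hj'
      have hj'lt : j' < c := by
        have := (hf.1 k j' hj'true).2
        rcases Nat.lt_or_ge j' c with h | h
        · exact h
        · exfalso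
          have : j' = c := by omega
          rw [this] at hj'true; rw [hj'true] at hcorner; exact Bool.noConfusion hcorner
      by_contra hcontra
      have hfic : f i c = true := by simpa using hcontra
      have hik : i < k := by
        have := (hf.1 i c hfic).1
        rcases Nat.lt_or_ge i k with h | h
        · exact h
        · exfalso
          have : i = k := by omega
          rw [this] at hfic; rw [hfic] at hcorner; exact Bool.noConfusion hcorner
      have := hf.2.1 i k j' c hik (Nat.lt_succ_self k) hj'lt (by omega) hfic hj'true
      rw [this] at hcorner; exact Bool.noConfusion hcorner
  · rintro (⟨hf, hcol⟩ | ⟨hf, hrow⟩)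
    · exact ⟨hf, hcol k⟩
    · exact ⟨hf, hrow c⟩

lemma corner_zero_r0 {k : ℕ} (l : ℕ → ℕ) (hpos : 1 ≤ l k) :
    {f | f ∈ SS (k+1) l 0 ∧ f k (l k - 1) = true} = ∅ := by
  ext f
  simp only [Set.mem_setOf_eq, Set.mem_empty_iff_false, iff_false, not_and]
  rintro ⟨h1, h2, h3⟩
  intro hcorner
  have hmem : l k - 1 ∈ (Finset.range (l k)).filter (fun j => f k j = true) := by
    simp [hcorner]; omega
  have hpos' : 0 < ((Finset.range (l k)).filter (fun j => f k j = true)).card :=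
    Finset.card_pos.mpr ⟨_, hmem⟩
  have : ((Finset.range (l k)).filter (fun j => f k j = true)).card ≤ cnt (k+1) l f := by
    unfold cnt
    exact Finset.single_le_sum (f := fun i => ((Finset.range (l i)).filter (fun j => f i j = true)).card)
      (fun i _ => Nat.zero_le _) (Finset.self_mem_range_succ k)
  omega

lemma SS_finite (n : ℕ) (l : ℕ → ℕ) (r : ℕ) : (SS n l r).Finite := by
  set N := (Finset.range n).sup l with hN
  have hle : ∀ i < n, l i ≤ N := fun i hi => Finset.le_sup (Finset.mem_range.mpr hi)
  have hsub : SS n l r ⊆ {f | Supp n l f} := fun f hf => hf.1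
  apply Set.Finite.subset _ hsub
  set π : Fl → (Fin n → Fin N → Bool) := fun f i j => f i j with hπ
  apply Set.Finite.of_finite_image (f := π) (Set.toFinite _)
  intro f hf g hg hfg
  funext i j
  by_cases hij : i < n ∧ j < l i
  · have hjN : j < N := lt_of_lt_of_le hij.2 (hle i hij.1)
    have := congrFun (congrFun hfg ⟨i, hij.1⟩) ⟨j, hjN⟩
    simpa [π] using this
  · have h1 : f i j = false := by
      by_contra hc
      exact hij (hf i j (by simpa using hc))
    have h2 : g i j = false := by
      by_contra hc
      exact hij (hg i j (by simpa using hc))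
    rw [h1, h2]

lemma corner_split {k : ℕ} (l : ℕ → ℕ) (r c : ℕ) :
    (SS (k+1) l r).ncard
      = {f | f ∈ SS (k+1) l r ∧ f k c = true}.ncard
        + {f | f ∈ SS (k+1) l r ∧ f k c = false}.ncard := by
  have hsplit : SS (k+1) l r
      = {f | f ∈ SS (k+1) l r ∧ f k c = true} ∪ {f | f ∈ SS (k+1) l r ∧ f k c = false} := by
    ext f
    simp only [Set.mem_union, Set.mem_setOf_eq]
    constructor
    · intro hf
      rcases Bool.eq_false_or_eq_true (f k c) with h | h
      · exact Or.inl ⟨hf, h⟩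
      · exact Or.inr ⟨hf, h⟩
    · rintro (⟨hf, _⟩ | ⟨hf, _⟩) <;> exact hf
  have hA : {f | f ∈ SS (k+1) l r ∧ f k c = true}.Finite :=
    (SS_finite (k+1) l r).subset (fun f hf => hf.1)
  have hB : {f | f ∈ SS (k+1) l r ∧ f k c = false}.Finite :=
    (SS_finite (k+1) l r).subset (fun f hf => hf.1)
  conv_lhs => rw [hsplit]
  exact Set.ncard_union_eq
    (by rw [Set.disjoint_left]; rintro f ⟨_, h1⟩ ⟨_, h2⟩; rw [h1] at h2; exact Bool.noConfusion h2)
    hA hB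

lemma corner_del {k : ℕ} (l : ℕ → ℕ) (r : ℕ) (hpos : 1 ≤ l k) :
    {f | f ∈ SS (k+1) l (r+1) ∧ f k (l k - 1) = true}.ncard
      = (SS (k+1) (fun i => if i = k then l k - 1 else l i) r).ncard := by
  set c := l k - 1 with hcdef
  have hlk : l k = c + 1 := by omega
  set l' : ℕ → ℕ := fun i => if i = k then c else l i with hl'
  set φ : Fl → Fl := fun f i j => if i = k ∧ j = c then false else f i j with hφ
  set A := {f | f ∈ SS (k+1) l (r+1) ∧ f k c = true} with hA
  have hφoff : ∀ (f : Fl) (i j : ℕ), ¬(i = k ∧ j = c) → φ f i j = f i j := by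
    intro f i j h; simp only [hφ]; rw [if_neg h]
  have hφle : ∀ (f : Fl) (i j : ℕ), φ f i j = true → f i j = true := by
    intro f i j h; simp only [hφ] at h
    split at h
    · exact Bool.noConfusion h
    · exact h
  -- counting helper
  have hcnt : ∀ f : Fl, f k c = true → (∀ i j, (i = k ∧ j = c) ∨ f i j = φ f i j) →
      cnt (k+1) l f = cnt (k+1) l' (φ f) + 1 := by
    intro f hfc hoff
    have hrow : ∀ i, i ≠ k →
        ((Finset.range (l i)).filter (fun j => f i j = true)).card
          = ((Finset.range (l' i)).filter (fun j => φ f i j = true)).card := by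
      intro i hik
      have : l' i = l i := by simp [hl', hik]
      rw [this]
      apply Finset.card_bij (fun j _ => j) ?_ (fun _ _ _ _ h => h) (fun j hj => ⟨j, ?_, rfl⟩)
      · intro j hj
        simp only [Finset.mem_filter] at hj ⊢
        refine ⟨hj.1, ?_⟩
        rcases hoff i j with h | h
        · exact absurd h.1 hik
        · rw [← h]; exact hj.2
      · simp only [Finset.mem_filter] at hj ⊢
        refine ⟨hj.1, ?_⟩
        rcases hoff i j with h | h
        · exact absurd h.1 hik
        · rw [h]; exact hj.2
    have hrowk : ((Finset.range (l k)).filter (fun j => f k j = true)).card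
        = ((Finset.range (l' k)).filter (fun j => φ f k j = true)).card + 1 := by
      have hl'k : l' k = c := by simp [hl']
      rw [hl'k, hlk, Finset.range_add_one, Finset.filter_insert, if_pos hfc]
      rw [Finset.card_insert_of_notMem (by simp)]
      have hfe : (Finset.range c).filter (fun j => φ f k j = true)
          = (Finset.range c).filter (fun j => f k j = true) := by
        apply Finset.filter_congr
        intro j hj
        have hjc : j ≠ c := by simp at hj; omega
        rw [hφoff f k j (fun hc => hjc hc.2)]
      rw [hfe]
    unfold cnt
    rw [Finset.sum_range_succ, Finset.sum_range_succ, hrowk]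
    rw [Finset.sum_congr rfl (fun i hi => hrow i (by simp at hi; omega))]
    omega
  have himg : φ '' A = SS (k+1) l' r := by
    ext g
    constructor
    · rintro ⟨f, ⟨⟨hsupp, hle, hcount⟩, hfc⟩, rfl⟩
      have hoff : ∀ i j, (i = k ∧ j = c) ∨ f i j = φ f i j := by
        intro i j
        by_cases h : i = k ∧ j = c
        · exact Or.inl h
        · exact Or.inr (hφoff f i j h).symm
      refine ⟨?_, ?_, ?_⟩
      · intro i j hij
        simp only [hφ] at hij
        split at hij
        · exact Bool.noConfusion hij
        · next h =>
          obtain ⟨hi, hj⟩ := hsupp i j hij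
          refine ⟨hi, ?_⟩
          by_cases hik : i = k
          · subst hik
            simp only [hl', if_pos rfl]
            have : j ≠ c := fun hc => h ⟨rfl, hc⟩
            omega
          · simp [hl', hik, hj]
      · intro i' i j' j h1 h2 h3 h4 hf1 hf2
        have hik' : i' ≠ k := by omega
        have hjl : j < l i := by
          by_cases hik : i = k
          · subst hik; simp only [hl', if_pos rfl] at h4; omega
          · simpa [hl', hik] using h4
        have hf1' : f i' j = true := hφle f i' j hf1
        have hf2' : f i j' = true := by
          rcases hoff i j' with h | h
          · obtain ⟨rfl, rfl⟩ := h
            simp only [hl', if_pos rfl] at h4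
            omega
          · rw [h]; exact hf2
        have := hle i' i j' j h1 h2 h3 hjl hf1' hf2'
        have hne : ¬ (i = k ∧ j = c) := by
          rintro ⟨rfl, rfl⟩
          simp only [hl', if_pos rfl] at h4
          omega
        rw [hφoff f i j hne]
        exact this
      · have := hcnt f hfc hoff
        omega
    · intro hg
      obtain ⟨hsupp, hle, hcount⟩ := hg
      set f : Fl := fun i j => if i = k ∧ j = c then true else g i j with hf
      have hgoff : ∀ i j, ¬(i = k ∧ j = c) → f i j = g i j := by
        intro i j h; simp [hf, h]
      have hgkc : g k c = false := by
        by_contra hc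
        have := (hsupp k c (by simpa using hc)).2
        simp [hl'] at this
      have hφf : φ f = g := by
        funext i j
        by_cases h : i = k ∧ j = c
        · obtain ⟨rfl, rfl⟩ := h
          simp [hφ, hgkc]
        · simp only [hφ, hf]
          rw [if_neg h, if_neg h]
      have hfkc : f k c = true := by simp [hf]
      have hoff : ∀ i j, (i = k ∧ j = c) ∨ f i j = φ f i j := by
        intro i j
        by_cases h : i = k ∧ j = c
        · exact Or.inl h
        · exact Or.inr (hφoff f i j h).symm
      refine ⟨f, ⟨⟨?_, ?_, ?_⟩, hfkc⟩, hφf⟩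
      · intro i j hij
        by_cases h : i = k ∧ j = c
        · obtain ⟨rfl, rfl⟩ := h
          exact ⟨by omega, by omega⟩
        · rw [hgoff i j h] at hij
          obtain ⟨hi, hj⟩ := hsupp i j hij
          refine ⟨hi, ?_⟩
          by_cases hik : i = k
          · subst hik; simp only [hl', if_pos rfl] at hj; omega
          · simpa [hl', hik] using hj
      · intro i' i j' j h1 h2 h3 h4 hf1 hf2
        by_cases h : i = k ∧ j = c
        · obtain ⟨rfl, rfl⟩ := h; exact hfkc
        · have hik' : i' ≠ k := by omega
          have hf1' : g i' j = true := by
            rw [← hgoff i' j (fun hc => hik' hc.1)]; exact hf1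
          have hjc : ¬ (i = k ∧ j' = c) := by
            rintro ⟨rfl, rfl⟩
            rw [hlk] at h4
            have : j = c := by omega
            exact h ⟨rfl, this⟩
          have hf2' : g i j' = true := by rw [← hgoff i j' hjc]; exact hf2
          have hjl' : j < l' i := by
            by_cases hik : i = k
            · subst hik
              simp only [hl', if_pos rfl]
              rw [hlk] at h4
              have : j ≠ c := fun hc => h ⟨rfl, hc⟩
              omega
            · simpa [hl', hik] using h4
          have := hle i' i j' j h1 h2 h3 hjl' hf1' hf2'
          rw [hgoff i j h]
          exact this
      · have := hcnt f hfkc hoff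
        rw [hφf] at this
        omega
  have hinj : Set.InjOn φ A := by
    intro f hf g hg hfg
    funext i j
    by_cases h : i = k ∧ j = c
    · obtain ⟨rfl, rfl⟩ := h
      rw [hf.2, hg.2]
    · rw [← hφoff f i j h, ← hφoff g i j h, hfg]
  rw [← himg, Set.ncard_image_of_injOn hinj]

def iotaF (c j : ℕ) : ℕ := if j < c then j else j + 1
def phiF (c : ℕ) (f : Fl) : Fl := fun i j => f i (iotaF c j)
def psiF (c : ℕ) (g : Fl) : Fl := fun i j =>
  if j < c then g i j else (if j = c then false else g i (j - 1))

lemma iotaF_lt {c j : ℕ} (h : j < c) : iotaF c j = j := by unfold iotaF; rw [if_pos h]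
lemma iotaF_ge {c j : ℕ} (h : c ≤ j) : iotaF c j = j + 1 := by
  unfold iotaF; rw [if_neg (by omega)]
lemma phiF_val (c : ℕ) (f : Fl) (i j : ℕ) : phiF c f i j = f i (iotaF c j) := rfl
lemma psiF_lt (c : ℕ) (g : Fl) (i : ℕ) {j : ℕ} (h : j < c) : psiF c g i j = g i j := by
  unfold psiF; rw [if_pos h]
lemma psiF_eq (c : ℕ) (g : Fl) (i : ℕ) : psiF c g i c = false := by
  unfold psiF; rw [if_neg (by omega), if_pos rfl]
lemma psiF_gt (c : ℕ) (g : Fl) (i : ℕ) {j : ℕ} (h : c < j) : psiF c g i j = g i (j - 1) := by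
  unfold psiF; rw [if_neg (by omega), if_neg (by omega)]

lemma col_del {n : ℕ} (l : ℕ → ℕ) (c r : ℕ) (hc : ∀ i < n, c < l i) :
    {f | f ∈ SS n l r ∧ ∀ i, f i c = false}.ncard
      = (SS n (fun i => l i - 1) r).ncard := by
  set X := {f | f ∈ SS n l r ∧ ∀ i, f i c = false} with hX
  have hιmono : ∀ {a b : ℕ}, a < b → iotaF c a < iotaF c b := by
    intro a b hab
    rcases Nat.lt_or_ge a c with h | h <;> rcases Nat.lt_or_ge b c with h' | h'
    · rw [iotaF_lt h, iotaF_lt h']; omega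
    · rw [iotaF_lt h, iotaF_ge h']; omega
    · omega
    · rw [iotaF_ge h, iotaF_ge h']; omega
  have hφψ : ∀ g, phiF c (psiF c g) = g := by
    intro g
    funext i j
    rw [phiF_val]
    rcases Nat.lt_or_ge j c with h | h
    · rw [iotaF_lt h, psiF_lt c g i h]
    · rw [iotaF_ge h, psiF_gt c g i (by omega : c < j + 1)]
      norm_num
  have hψφ : ∀ f, (∀ i, f i c = false) → psiF c (phiF c f) = f := by
    intro f hcol
    funext i j
    rcases Nat.lt_or_ge j c with h | h
    · rw [psiF_lt c _ i h, phiF_val, iotaF_lt h]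
    · rcases Nat.eq_or_lt_of_le h with rfl | h'
      · rw [psiF_eq, hcol i]
      · rw [psiF_gt c _ i h', phiF_val, iotaF_ge (by omega : c ≤ j - 1)]
        congr 1
        omega
  -- row count preservation
  have hrow : ∀ (f : Fl) (i : ℕ), i < n → f i c = false →
      ((Finset.range (l i - 1)).filter (fun j => phiF c f i j = true)).card
        = ((Finset.range (l i)).filter (fun j => f i j = true)).card := by
    intro f i hin hfc
    have hci : c < l i := hc i hin
    apply Finset.card_bij (fun j _ => iotaF c j)
    · intro j hj
      rw [Finset.mem_filter, Finset.mem_range] at hj ⊢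
      simp only [phiF_val] at hj ⊢
      refine ⟨?_, hj.2⟩
      rcases Nat.lt_or_ge j c with h | h
      · rw [iotaF_lt h]; omega
      · rw [iotaF_ge h]; omega
    · intro a ha b hb hab
      by_contra hne
      rcases Nat.lt_or_ge a b with h | h
      · exact absurd hab (Nat.ne_of_lt (hιmono h))
      · have : b < a := by omega
        exact absurd hab.symm (Nat.ne_of_lt (hιmono this))
    · intro m hm
      simp only [Finset.mem_filter, Finset.mem_range] at hm
      have hmc : m ≠ c := by
        intro heq; rw [heq, hfc] at hm; exact Bool.noConfusion hm.2
      rcases Nat.lt_or_ge m c with h | h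
      · refine ⟨m, ?_, iotaF_lt h⟩
        rw [Finset.mem_filter, Finset.mem_range]
        simp only [phiF_val, iotaF_lt h]
        exact ⟨by omega, hm.2⟩
      · have h' : c < m := by omega
        have hι' : iotaF c (m - 1) = m := by rw [iotaF_ge (by omega : c ≤ m - 1)]; omega
        refine ⟨m - 1, ?_, hι'⟩
        rw [Finset.mem_filter, Finset.mem_range]
        simp only [phiF_val, hι']
        exact ⟨by omega, hm.2⟩
  have hcnt : ∀ (f : Fl), (∀ i, f i c = false) →
      cnt n (fun i => l i - 1) (phiF c f) = cnt n l f := by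
    intro f hcol
    apply Finset.sum_congr rfl
    intro i hi
    exact hrow f i (Finset.mem_range.mp hi) (hcol i)
  have himg : phiF c '' X = SS n (fun i => l i - 1) r := by
    ext g
    constructor
    · rintro ⟨f, ⟨⟨hsupp, hle, hcount⟩, hcol⟩, rfl⟩
      refine ⟨?_, ?_, ?_⟩
      · intro i j hij
        rw [phiF_val] at hij
        obtain ⟨hi, hj⟩ := hsupp i (iotaF c j) hij
        refine ⟨hi, show j < l i - 1 from ?_⟩
        have := hc i hi
        rcases Nat.lt_or_ge j c with h | h
        · rw [iotaF_lt h] at hj; omega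
        · rw [iotaF_ge h] at hj; omega
      · intro i' i j' j h1 h2 h3 h4 hf1 hf2
        rw [phiF_val] at hf1 hf2 ⊢
        have h4' : j < l i - 1 := h4
        have hciltn : c < l i := hc i h2
        apply hle i' i (iotaF c j') (iotaF c j) h1 h2 (hιmono h3) ?_ hf1 hf2
        rcases Nat.lt_or_ge j c with h | h
        · rw [iotaF_lt h]; omega
        · rw [iotaF_ge h]; omega
      · rw [hcnt f hcol]; exact hcount
    · rintro ⟨hsupp, hle, hcount⟩
      refine ⟨psiF c g, ⟨⟨?_, ?_, ?_⟩, fun i => psiF_eq c g i⟩, hφψ g⟩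
      · intro i j hij
        rcases Nat.lt_or_ge j c with h | h
        · rw [psiF_lt c g i h] at hij
          obtain ⟨hi, hj⟩ := hsupp i j hij
          have hj' : j < l i - 1 := hj
          exact ⟨hi, by omega⟩
        · rcases Nat.eq_or_lt_of_le h with rfl | h'
          · rw [psiF_eq c g i] at hij
            exact Bool.noConfusion hij
          · rw [psiF_gt c g i h'] at hij
            obtain ⟨hi, hj⟩ := hsupp i (j - 1) hij
            have hj' : j - 1 < l i - 1 := hj
            exact ⟨hi, by omega⟩
      · intro i' i j' j h1 h2 h3 h4 hf1 hf2
        have hjc : j ≠ c := by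
          rintro rfl
          rw [psiF_eq] at hf1
          exact Bool.noConfusion hf1
        have hjc' : j' ≠ c := by
          rintro rfl
          rw [psiF_eq] at hf2
          exact Bool.noConfusion hf2
        have hciltn : c < l i := hc i h2
        set J := if j < c then j else j - 1 with hJ
        set J' := if j' < c then j' else j' - 1 with hJ'
        have hψJ : ∀ (a : ℕ), psiF c g a j = g a J := by
          intro a
          rcases Nat.lt_or_ge j c with h | h
          · rw [psiF_lt c g a h, hJ, if_pos h]
          · rw [psiF_gt c g a (by omega : c < j), hJ, if_neg (by omega)]
        have hψJ' : ∀ (a : ℕ), psiF c g a j' = g a J' := by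
          intro a
          rcases Nat.lt_or_ge j' c with h | h
          · rw [psiF_lt c g a h, hJ', if_pos h]
          · rw [psiF_gt c g a (by omega : c < j'), hJ', if_neg (by omega)]
        have hg1 : g i' J = true := by rw [← hψJ i']; exact hf1
        have hg2 : g i J' = true := by rw [← hψJ' i]; exact hf2
        have hJ'J : J' < J := by
          rw [hJ, hJ']
          split <;> split <;> omega
        have hJl : J < l i - 1 := by
          rw [hJ]
          split <;> omega
        rw [hψJ i]
        exact hle i' i J' J h1 h2 hJ'J hJl hg1 hg2
      · rw [← hcnt (psiF c g) (fun i => psiF_eq c g i), hφψ g]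
        exact hcount
  have hinj : Set.InjOn (phiF c) X := by
    intro f hf g hg hfg
    rw [← hψφ f hf.2, ← hψφ g hg.2, hfg]
  rw [← himg, Set.ncard_image_of_injOn hinj]

lemma row_card {m : ℕ} (p : Fin m → Bool) (q : ℕ → Bool) (hq : ∀ j : Fin m, q j.1 = p j) :
    ((Finset.range m).filter (fun j => q j = true)).card
      = (Finset.univ.filter (fun j : Fin m => p j = true)).card := by
  apply Finset.card_bij (fun (j : ℕ) (hj : j ∈ (Finset.range m).filter (fun j => q j = true)) =>
    (⟨j, Finset.mem_range.mp (Finset.mem_filter.mp hj).1⟩ : Fin m))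
  · intro a ha
    simp only [Finset.mem_filter, Finset.mem_univ, true_and]
    rw [← hq]
    exact (Finset.mem_filter.mp ha).2
  · intro a ha b hb hab
    exact congrArg Fin.val hab
  · intro b hb
    simp only [Finset.mem_filter, Finset.mem_univ, true_and] at hb
    refine ⟨b.1, Finset.mem_filter.mpr ⟨Finset.mem_range.mpr b.isLt, ?_⟩, rfl⟩
    rw [hq b]; exact hb

def extF {k : ℕ} (lam : Fin k → ℕ) (D : ∀ i : Fin k, Fin (lam i) → Bool) : Fl :=
  fun i j => if h : i < k then (if h2 : j < lam ⟨i, h⟩ then D ⟨i, h⟩ ⟨j, h2⟩ else false) else false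

lemma extF_pos {k : ℕ} (lam : Fin k → ℕ) (D : ∀ i : Fin k, Fin (lam i) → Bool)
    {i j : ℕ} (h : i < k) (h2 : j < lam ⟨i, h⟩) :
    extF lam D i j = D ⟨i, h⟩ ⟨j, h2⟩ := by
  unfold extF; rw [dif_pos h, dif_pos h2]

lemma extF_true {k : ℕ} (lam : Fin k → ℕ) (D : ∀ i : Fin k, Fin (lam i) → Bool)
    {i j : ℕ} (h : extF lam D i j = true) :
    ∃ (hi : i < k) (hj : j < lam ⟨i, hi⟩), D ⟨i, hi⟩ ⟨j, hj⟩ = true := by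
  unfold extF at h
  split at h
  · split at h
    · exact ⟨‹_›, ‹_›, h⟩
    · exact Bool.noConfusion h
  · exact Bool.noConfusion h

lemma leF_eq_ncard {k : ℕ} (lam : Fin k → ℕ) (l : ℕ → ℕ)
    (hl : ∀ i : Fin k, l i.1 = lam i) (r : ℕ) :
    leF lam r = (SS k l r).ncard := by
  rw [leF, ← Nat.card_coe_set_eq]
  apply Nat.card_congr
  have hcnt : ∀ D : (∀ i : Fin k, Fin (lam i) → Bool),
      cnt k l (extF lam D) = onesCount lam D := by
    intro D
    unfold cnt onesCount
    rw [← Fin.sum_univ_eq_sum_range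
      (fun i => ((Finset.range (l i)).filter (fun j => extF lam D i j = true)).card) k]
    apply Finset.sum_congr rfl
    intro i _
    rw [hl i]
    have : ∀ x : Fin (lam i), extF lam D i.1 x.1 = D i x := by
      intro x
      rw [extF_pos lam D i.isLt (by simp [Fin.eta] : x.1 < lam ⟨i.1, i.isLt⟩)]
    exact row_card (fun x => D i x) (fun j => extF lam D i.1 j) this
  refine
    { toFun := fun p => ⟨extF lam p.1, ?_, ?_, ?_⟩
      invFun := fun f => ⟨fun i j => f.1 i.1 j.1, ?_, ?_⟩
      left_inv := ?_
      right_inv := ?_ }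
  · -- Supp
    intro i j hij
    obtain ⟨hi, hj, _⟩ := extF_true lam p.1 hij
    exact ⟨hi, by rw [hl ⟨i, hi⟩]; exact hj⟩
  · -- GLe
    intro i' i j' j h1 h2 h3 h4 hf1 hf2
    obtain ⟨hi', hji', hD1⟩ := extF_true lam p.1 hf1
    obtain ⟨hi, hj2', hD2⟩ := extF_true lam p.1 hf2
    have hj : j < lam ⟨i, h2⟩ := by rw [← hl ⟨i, h2⟩]; exact h4
    have := p.2.1 ⟨i, h2⟩ ⟨i', hi'⟩ j j' hj hj2' hji' h1 h3 hD1 hD2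
    rw [extF_pos lam p.1 h2 hj]
    exact this
  · rw [hcnt]; exact p.2.2
  · -- IsLeFilling of restriction
    intro i i' j j' hj hj' hji' hii' hjj' hD1 hD2
    have h4 : j < l i.1 := by rw [hl i]; exact hj
    exact f.2.2.1 i'.1 i.1 j' j hii' i.isLt hjj' h4 hD1 hD2
  · -- onesCount of restriction
    obtain ⟨hsupp, hle, hcount⟩ := f.2
    have key : (onesCount lam fun (i : Fin k) (j : Fin (lam i)) => f.1 i.1 j.1)
        = cnt k l f.1 := by
      unfold cnt onesCount
      rw [← Fin.sum_univ_eq_sum_range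
        (fun i => ((Finset.range (l i)).filter (fun j => f.1 i j = true)).card) k]
      apply Finset.sum_congr rfl
      intro i _
      rw [hl i]
      exact (row_card (fun x : Fin (lam i) => f.1 i.1 x.1) (fun j => f.1 i.1 j)
        (fun x => rfl)).symm
    exact key.trans hcount
  · -- left_inv
    intro p
    apply Subtype.ext
    funext i j
    exact extF_pos lam p.1 i.isLt (by simp [Fin.eta] : j.1 < lam ⟨i.1, i.isLt⟩)
  · -- right_inv
    intro f
    apply Subtype.ext
    show extF lam (fun (a : Fin k) (b : Fin (lam a)) => f.1 a.1 b.1) = f.1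
    set D : ∀ a : Fin k, Fin (lam a) → Bool := fun a b => f.1 a.1 b.1 with hD
    funext i j
    by_cases hi : i < k
    · by_cases hj : j < lam ⟨i, hi⟩
      · exact extF_pos lam D hi hj
      · have h1 : extF lam D i j = false := by unfold extF; rw [dif_pos hi, dif_neg hj]
        have h2 : f.1 i j = false := by
          by_contra hc
          have := (f.2.1 i j (by simpa using hc)).2
          rw [hl ⟨i, hi⟩] at this
          exact hj this
        rw [h1, h2]
    · have h1 : extF lam D i j = false := by unfold extF; rw [dif_neg hi]
      have h2 : f.1 i j = false := by
        by_contra hc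
        have := (f.2.1 i j (by simpa using hc)).1
        exact hi this
      rw [h1, h2]

end LeAux

open LeAux

/-- The recurrence
`F_λ(q) = q·F_{(λ₁,…,λ_{k-1},λ_k−1)}(q) + F_{(λ₁,…,λ_{k-1})}(q) + F_{(λ₁−1,…,λ_k−1)}(q) − F_{(λ₁−1,…,λ_{k-1}−1)}(q)`
for a partition `λ = (λ₁,…,λ_k)` with all parts `≥ 1`, stated coefficientwise. -/
theorem leF_recurrence (k : ℕ) (lam : Fin (k + 1) → ℕ) (hanti : Antitone lam)
    (hpos : ∀ i, 1 ≤ lam i) (r : ℕ) :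
    (leF lam r : ℤ) =
      (if r = 0 then 0 else
        (leF (Function.update lam (Fin.last k) (lam (Fin.last k) - 1)) (r - 1) : ℤ))
      + (leF (fun i : Fin k => lam i.castSucc) r : ℤ)
      + (leF (fun i : Fin (k + 1) => lam i - 1) r : ℤ)
      - (leF (fun i : Fin k => lam i.castSucc - 1) r : ℤ) := by
  classical
  obtain ⟨l, hlval⟩ : ∃ l : ℕ → ℕ, ∀ i : Fin (k + 1), l i.1 = lam i := by
    refine ⟨fun i => if h : i < k + 1 then lam ⟨i, h⟩ else 0, fun i => ?_⟩
    show (if h : i.1 < k + 1 then lam ⟨i.1, h⟩ else 0) = lam i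
    rw [dif_pos i.isLt]
  have hlk : l k = lam (Fin.last k) := hlval (Fin.last k)
  have hposk : 1 ≤ l k := by rw [hlk]; exact hpos _
  have hcl : ∀ i < k + 1, l k - 1 < l i := by
    intro i hi
    have h1 : lam (Fin.last k) ≤ lam ⟨i, hi⟩ := hanti (Fin.le_last _)
    have h2 : l i = lam ⟨i, hi⟩ := hlval ⟨i, hi⟩
    omega
  have hanti' : ∀ i ≤ k, l k ≤ l i := by
    intro i hi
    have hik : i < k + 1 := by omega
    have h1 : lam (Fin.last k) ≤ lam ⟨i, hik⟩ := hanti (Fin.le_last _)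
    have h2 : l i = lam ⟨i, hik⟩ := hlval ⟨i, hik⟩
    omega
  obtain ⟨Xs, hXs⟩ : ∃ X, X = {f | f ∈ SS (k + 1) l r ∧ ∀ i, f i (l k - 1) = false} :=
    ⟨_, rfl⟩
  obtain ⟨Ys, hYs⟩ : ∃ Y, Y = {f | f ∈ SS (k + 1) l r ∧ ∀ j, f k j = false} :=
    ⟨_, rfl⟩
  -- the five counts
  have e0 : leF lam r = (SS (k + 1) l r).ncard := leF_eq_ncard lam l hlval r
  have esplit : (SS (k + 1) l r).ncard
      = {f | f ∈ SS (k + 1) l r ∧ f k (l k - 1) = true}.ncard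
        + {f | f ∈ SS (k + 1) l r ∧ f k (l k - 1) = false}.ncard :=
    corner_split (k := k) l r (l k - 1)
  have hXfin : Xs.Finite := by
    rw [hXs]; exact (SS_finite (k + 1) l r).subset fun f hf => hf.1
  have hYfin : Ys.Finite := by
    rw [hYs]; exact (SS_finite (k + 1) l r).subset fun f hf => hf.1
  have eunion : {f | f ∈ SS (k + 1) l r ∧ f k (l k - 1) = false} = Xs ∪ Ys := by
    rw [hXs, hYs]; exact corner_zero_eq_union l r hposk hanti'
  have eincl : (Xs ∪ Ys).ncard + (Xs ∩ Ys).ncard = Xs.ncard + Ys.ncard :=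
    Set.ncard_union_add_ncard_inter Xs Ys hXfin hYfin
  have eY : Ys.ncard = leF (fun i : Fin k => lam i.castSucc) r := by
    rw [hYs, row_del]
    exact (leF_eq_ncard (fun i : Fin k => lam i.castSucc) l
      (fun i => hlval i.castSucc) r).symm
  have hlcast : ∀ i : Fin k, (fun x => l x - 1) i.1 = lam i.castSucc - 1 := by
    intro i
    show l i.1 - 1 = lam i.castSucc - 1
    have h2 : l i.1 = lam i.castSucc := hlval i.castSucc
    rw [h2]
  have eX : Xs.ncard = leF (fun i : Fin (k + 1) => lam i - 1) r := by
    rw [hXs, col_del l (l k - 1) r hcl]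
    refine (leF_eq_ncard (fun i : Fin (k + 1) => lam i - 1) (fun x => l x - 1)
      (fun i => ?_) r).symm
    show l i.1 - 1 = lam i - 1
    have h2 : l i.1 = lam i := hlval i
    rw [h2]
  have eI : (Xs ∩ Ys).ncard = leF (fun i : Fin k => lam i.castSucc - 1) r := by
    have hXY : Xs ∩ Ys = {f | f ∈ SS k l r ∧ ∀ i, f i (l k - 1) = false} := by
      rw [hXs, hYs]
      ext f
      have hrow := Set.ext_iff.mp (row_del (k := k) l r) f
      simp only [Set.mem_inter_iff, Set.mem_setOf_eq] at hrow ⊢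
      constructor
      · rintro ⟨⟨hf, hcol⟩, ⟨_, hrowz⟩⟩
        exact ⟨hrow.mp ⟨hf, hrowz⟩, hcol⟩
      · rintro ⟨hf, hcol⟩
        obtain ⟨hf', hrowz⟩ := hrow.mpr hf
        exact ⟨⟨hf', hcol⟩, hf', hrowz⟩
    have hcl' : ∀ i < k, l k - 1 < l i := fun i hi => hcl i (Nat.lt_succ_of_lt hi)
    rw [hXY, col_del l (l k - 1) r hcl']
    exact (leF_eq_ncard (fun i : Fin k => lam i.castSucc - 1) (fun x => l x - 1)
      hlcast r).symm
  -- the corner term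
  have hupd : ∀ i : Fin (k + 1),
      (fun x => if x = k then l k - 1 else l x) i.1
        = Function.update lam (Fin.last k) (lam (Fin.last k) - 1) i := by
    intro i
    by_cases h : i = Fin.last k
    · subst h
      show (if (Fin.last k).1 = k then l k - 1 else l (Fin.last k).1)
        = Function.update lam (Fin.last k) (lam (Fin.last k) - 1) (Fin.last k)
      rw [Function.update_self]
      exact (if_pos rfl).trans (by rw [hlk])
    · have hik : i.1 ≠ k := by
        intro hc
        exact h (Fin.ext hc)
      show (if i.1 = k then l k - 1 else l i.1)
        = Function.update lam (Fin.last k) (lam (Fin.last k) - 1) i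
      rw [Function.update_of_ne h, if_neg hik, hlval i]
  rcases Nat.eq_zero_or_pos r with rfl | hr
  · have eS1 : {f | f ∈ SS (k + 1) l 0 ∧ f k (l k - 1) = true}.ncard = 0 := by
      rw [corner_zero_r0 l hposk, Set.ncard_empty]
    rw [if_pos rfl]
    rw [eS1, eunion] at esplit
    rw [eX, eY] at eincl
    rw [eI] at eincl
    rw [e0, esplit]
    clear * - eincl
    omega
  · obtain ⟨r', rfl⟩ : ∃ r', r = r' + 1 := ⟨r - 1, (Nat.succ_pred_eq_of_pos hr).symm⟩
    have eS1 : {f | f ∈ SS (k + 1) l (r' + 1) ∧ f k (l k - 1) = true}.ncard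
        = leF (Function.update lam (Fin.last k) (lam (Fin.last k) - 1)) r' := by
      rw [corner_del l r' hposk]
      exact (leF_eq_ncard (Function.update lam (Fin.last k) (lam (Fin.last k) - 1))
        (fun x => if x = k then l k - 1 else l x) hupd r').symm
    have hrne : ¬ (r' + 1 = 0) := Nat.succ_ne_zero r'
    rw [if_neg hrne]
    have hr1 : r' + 1 - 1 = r' := rfl
    rw [hr1]
    rw [eS1, eunion] at esplit
    rw [eX, eY] at eincl
    rw [eI] at eincl
    rw [e0, esplit]
    clear * - eincl
    omega
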